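/- arXiv:2311.12888 — 2 statements merged into one kernel-verified Lean document; each statement's English description precedes it below -/
import Mathlib

section
/- Let h ∈ [μ, L] with 0 < μ ≤ L, η = 4/(√μ+√L)², β = ((√L−√μ)/(√L+√μ))². Then the quadratic λ² − (1+β−ηh)λ + β has complex conjugate roots of modulus exactly √β = (√L−√μ)/(√L+√μ), i.e., (1+β−ηh)² ≤ 4β. -/
lemma hb_root_abs (c β : ℝ) (hd : c ^ 2 ≤ 4 * β) (lam : ℂ)
    (hlam : lam ^ 2 - (c : ℂ) * lam + (β : ℂ) = 0) :
    ‖lam‖ = Real.sqrt β := by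
  obtain ⟨hre, him⟩ : (lam ^ 2 - (c : ℂ) * lam + (β : ℂ)).re = 0 ∧
      (lam ^ 2 - (c : ℂ) * lam + (β : ℂ)).im = 0 := by
    rw [hlam]; simp
  simp only [Complex.add_re, Complex.sub_re, Complex.add_im, Complex.sub_im, pow_two,
    Complex.mul_re, Complex.mul_im, Complex.ofReal_re, Complex.ofReal_im] at hre him
  have hre' : lam.re ^ 2 - lam.im ^ 2 - c * lam.re + β = 0 := by ring_nf; ring_nf at hre; linarith
  have him' : lam.im * (2 * lam.re - c) = 0 := by ring_nf; ring_nf at him; linarith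
  have hnorm : lam.re ^ 2 + lam.im ^ 2 = β := by
    rcases mul_eq_zero.mp him' with hy | hx
    · have hx2 : lam.re ^ 2 - c * lam.re + β = 0 := by rw [hy] at hre'; linarith [hre']
      have h4 : (2 * lam.re - c) ^ 2 = c ^ 2 - 4 * β := by linear_combination 4 * hx2
      have hc4 : c ^ 2 = 4 * β := le_antisymm hd (by nlinarith [sq_nonneg (2 * lam.re - c)])
      have hxc : 2 * lam.re - c = 0 := by
        have h0 : (2 * lam.re - c) ^ 2 = 0 := by rw [h4, hc4]; ring
        exact pow_eq_zero_iff two_ne_zero |>.mp h0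
      rw [hy]
      nlinarith [hxc, hc4]
    · linear_combination -hre' + lam.re * hx
  rw [Complex.norm_def, Complex.normSq_apply, show lam.re * lam.re + lam.im * lam.im
    = lam.re ^ 2 + lam.im ^ 2 by ring, hnorm]

/-- Scalar heavy-ball characteristic polynomial: for h ∈ [μ, L] and the standard
    heavy-ball parameters, the discriminant is nonpositive, and both complex roots of
    λ² - (1+β-ηh)λ + β have modulus exactly √β = (√L - √μ)/(√L + √μ). -/
theorem stmt_6 (μ L h η β : ℝ) (hμ : 0 < μ) (hμL : μ ≤ L)
    (hh : h ∈ Set.Icc μ L)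
    (hη : η = 4 / (Real.sqrt μ + Real.sqrt L) ^ 2)
    (hβ : β = ((Real.sqrt L - Real.sqrt μ) / (Real.sqrt L + Real.sqrt μ)) ^ 2) :
    (1 + β - η * h) ^ 2 ≤ 4 * β ∧
      Real.sqrt β = (Real.sqrt L - Real.sqrt μ) / (Real.sqrt L + Real.sqrt μ) ∧
      ∀ lam : ℂ, lam ^ 2 - ((1 + β - η * h : ℝ) : ℂ) * lam + ((β : ℝ) : ℂ) = 0 →
        ‖lam‖ = Real.sqrt β := by
  obtain ⟨hh1, hh2⟩ := hh
  set s := Real.sqrt μ with hs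
  set t := Real.sqrt L with ht
  have hs0 : 0 < s := Real.sqrt_pos.mpr hμ
  have ht0 : 0 < t := Real.sqrt_pos.mpr (lt_of_lt_of_le hμ hμL)
  have hst : s ≤ t := Real.sqrt_le_sqrt hμL
  have hs2 : s ^ 2 = μ := Real.sq_sqrt hμ.le
  have ht2 : t ^ 2 = L := Real.sq_sqrt (le_trans hμ.le hμL)
  have hsum : (0:ℝ) < s + t := by linarith
  have hβ' : β = ((t - s) / (t + s)) ^ 2 := hβ
  have hβval : β * (s + t) ^ 2 = (t - s) ^ 2 := by
    rw [hβ', div_pow, show (s + t) ^ 2 = (t + s) ^ 2 by ring,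
      div_mul_cancel₀ _ (by positivity : (t + s) ^ 2 ≠ 0)]
  have hηval : η * (s + t) ^ 2 = 4 := by
    rw [hη, div_mul_cancel₀ _ (by positivity : (s + t) ^ 2 ≠ 0)]
  have hβ0 : 0 ≤ β := by rw [hβ']; positivity
  have hsp : (0:ℝ) < ((s + t) ^ 2) ^ 2 := by positivity
  have e1 : (1 + β - η * h) * (s + t) ^ 2 = 2 * (s ^ 2 + t ^ 2 - 2 * h) := by
    linear_combination hβval - h * hηval
  have h2 : ((1 + β - η * h) * (s + t) ^ 2) ^ 2 ≤ 4 * β * ((s + t) ^ 2) ^ 2 := by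
    rw [e1]
    nlinarith [hβval, mul_nonneg (by nlinarith : (0:ℝ) ≤ h - s ^ 2)
      (by nlinarith : (0:ℝ) ≤ t ^ 2 - h)]
  have hdisc : (1 + β - η * h) ^ 2 ≤ 4 * β := by
    have h2' : (1 + β - η * h) ^ 2 * ((s + t) ^ 2) ^ 2 ≤ 4 * β * ((s + t) ^ 2) ^ 2 := by
      nlinarith [h2]
    exact le_of_mul_le_mul_right h2' hsp
  have hsqrt : Real.sqrt β = (t - s) / (t + s) := by
    rw [hβ', Real.sqrt_sq (by apply div_nonneg <;> linarith)]
  exact ⟨hdisc, hsqrt, fun lam hlam => hb_root_abs _ _ hdisc lam hlam⟩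
end

section
/- Let H be symmetric with μI ⪯ H ⪯ LI, 0 < μ ≤ L, η = 1/L and β = (√L−√μ)/(√L+√μ) (more precisely β = (√κ−1)/(√κ+1) with κ = L/μ). Then each eigenvalue λ of M₂ = [[(1+β)(I−ηH), −β(I−ηH)],[I,0]] satisfies |λ| ≤ 1 − √(μ/L). -/
open Matrix Complex
open scoped ComplexOrder



/-- A root of a real monic quadratic with nonpositive discriminant has squared norm
equal to the constant coefficient. -/
lemma nest_aux_quad (b c : ℝ) (z : ℂ) (hd : b^2 ≤ 4*c)
    (hz : z^2 - (b:ℂ)*z + (c:ℂ) = 0) : ‖z‖^2 = c := by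
  have hre : z.re^2 - z.im^2 - b*z.re + c = 0 := by
    have : (z^2 - (b:ℂ)*z + (c:ℂ)).re = 0 := by rw [hz]; rfl
    simp only [Complex.add_re, Complex.sub_re, Complex.mul_re, Complex.ofReal_re,
      Complex.ofReal_im, pow_two] at this
    nlinarith [this]
  have him : z.im * (2*z.re - b) = 0 := by
    have : (z^2 - (b:ℂ)*z + (c:ℂ)).im = 0 := by rw [hz]; rfl
    simp only [Complex.add_im, Complex.sub_im, Complex.mul_im, Complex.mul_re,
      Complex.ofReal_re, Complex.ofReal_im, pow_two] at this
    nlinarith [this]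
  have hn : ‖z‖^2 = z.re^2 + z.im^2 := by
    rw [Complex.sq_norm, Complex.normSq_apply]; ring
  rw [hn]
  rcases eq_or_ne z.im 0 with h0 | h0
  · rw [h0] at hre ⊢
    have h2 : (2*z.re - b)^2 = b^2 - 4*c := by nlinarith [hre]
    have h3 : (2*z.re - b)^2 = 0 := le_antisymm (by linarith) (sq_nonneg _)
    have h4 : 2*z.re - b = 0 := by
      have := sq_eq_zero_iff.mp h3; exact this
    linear_combination (-1:ℝ)*hre + z.re*h4
  · have h4 : 2*z.re - b = 0 := by
      rcases mul_eq_zero.mp him with h | h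
      · exact absurd h h0
      · exact h
    linear_combination (-1:ℝ)*hre + z.re*h4


/-- Mapping a real PSD matrix into ℂ preserves positive semidefiniteness. -/
lemma nest_psd_map {m : Type*} [Fintype m] [DecidableEq m] {M : Matrix m m ℝ}
    (h : M.PosSemidef) : (M.map (algebraMap ℝ ℂ)).PosSemidef := by
  open scoped MatrixOrder in
  obtain ⟨B, hB', -, hBM⟩ :=
    sub_zero M ▸ CFC.exists_sqrt_of_isSelfAdjoint_of_quasispectrumRestricts h.isHermitian
      (QuasispectrumRestricts.nnreal_of_nonneg h.nonneg)
  rw [sub_zero] at hBM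
  subst hBM
  nth_rewrite 1 [← show Bᴴ = B from hB'.star_eq]
  rw [Matrix.map_mul]
  have hB : (Bᴴ).map (algebraMap ℝ ℂ) = (B.map (algebraMap ℝ ℂ))ᴴ := by
    ext i j
    simp [Matrix.conjTranspose_apply, Matrix.map_apply, Complex.conj_ofReal]
  rw [hB]
  exact Matrix.posSemidef_conjTranspose_mul_self _

/-- A complex eigenvalue of (the complexification of) a real PSD matrix is real
and nonnegative. -/
lemma nest_psd_eig {m : Type*} [Fintype m] [DecidableEq m] {M : Matrix m m ℝ}
    (h : M.PosSemidef) {y : m → ℂ} {c : ℂ} (hy : y ≠ 0)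
    (heq : (M.map (algebraMap ℝ ℂ)) *ᵥ y = c • y) : c.im = 0 ∧ 0 ≤ c.re := by
  have h1 := (nest_psd_map h).dotProduct_mulVec_nonneg y
  rw [heq] at h1
  set T : ℝ := ∑ i, Complex.normSq (y i) with hT
  have hTpos : 0 < T := by
    obtain ⟨i, hi⟩ := Function.ne_iff.mp hy
    exact Finset.sum_pos' (fun j _ => Complex.normSq_nonneg _)
      ⟨i, Finset.mem_univ i, Complex.normSq_pos.mpr hi⟩
  have h2 : star y ⬝ᵥ (c • y) = c * (T:ℂ) := by
    simp only [dotProduct, Pi.star_apply, Pi.smul_apply, smul_eq_mul, hT]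
    push_cast
    rw [Finset.mul_sum]
    refine Finset.sum_congr rfl fun i _ => ?_
    rw [show star (y i) * (c * y i) = c * (y i * (starRingEnd ℂ) (y i)) from by
        rw [RCLike.star_def]; ring,
      Complex.mul_conj]
  rw [h2] at h1
  rw [Complex.le_def] at h1
  simp only [Complex.mul_re, Complex.mul_im, Complex.ofReal_re, Complex.ofReal_im,
    Complex.zero_re, Complex.zero_im, mul_zero, sub_zero, zero_mul, add_zero] at h1
  obtain ⟨hr, hi⟩ := h1
  constructor
  · have hi' : c.im * T = 0 := by linarith [hi]
    rcases mul_eq_zero.mp hi' with h | h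
    · exact h
    · exact absurd h hTpos.ne'
  · nlinarith [hr, hTpos]

/-- Extract an eigenvector from spectrum membership for a complex matrix. -/
lemma nest_eig {m : Type*} [Fintype m] [DecidableEq m] {M : Matrix m m ℂ} {lam : ℂ}
    (h : lam ∈ spectrum ℂ M) : ∃ v, v ≠ 0 ∧ M *ᵥ v = lam • v := by
  rw [spectrum.mem_iff] at h
  have hdet : (lam • (1 : Matrix m m ℂ) - M).det = 0 := by
    by_contra hd
    exact h (by
      rw [Algebra.algebraMap_eq_smul_one]
      exact (Matrix.isUnit_iff_isUnit_det _).mpr (isUnit_iff_ne_zero.mpr hd))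
  obtain ⟨v, hv, hv0⟩ := Matrix.exists_mulVec_eq_zero_iff.mpr hdet
  refine ⟨v, hv, ?_⟩
  have := hv0
  rw [Matrix.sub_mulVec, Matrix.smul_mulVec, Matrix.one_mulVec, sub_eq_zero] at this
  exact this.symm


/-- Spectral radius bound for the Nesterov iteration matrix. -/
theorem stmt_16 (n : ℕ) (μ L η β : ℝ) (hμ : 0 < μ) (hμL : μ ≤ L)
    (hη : η = 1 / L)
    (hβ : β = (Real.sqrt (L / μ) - 1) / (Real.sqrt (L / μ) + 1))
    (H : Matrix (Fin n) (Fin n) ℝ) (hsymm : H.IsSymm)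
    (hlow : (H - μ • (1 : Matrix (Fin n) (Fin n) ℝ)).PosSemidef)
    (hup : (L • (1 : Matrix (Fin n) (Fin n) ℝ) - H).PosSemidef) :
    ∀ lam ∈ spectrum ℂ
        ((Matrix.fromBlocks
            ((1 + β) • ((1 : Matrix (Fin n) (Fin n) ℝ) - η • H))
            ((-β) • ((1 : Matrix (Fin n) (Fin n) ℝ) - η • H)) 1 0).map (algebraMap ℝ ℂ) : Matrix (Fin n ⊕ Fin n) (Fin n ⊕ Fin n) ℂ),
      ‖lam‖ ≤ 1 - Real.sqrt (μ / L) := by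
  subst hη
  intro lam hlam
  have hL : 0 < L := lt_of_lt_of_le hμ hμL
  set s : ℝ := Real.sqrt (μ / L) with hs
  have hs0 : 0 < s := Real.sqrt_pos.mpr (by positivity)
  have hs2 : s^2 = μ / L := Real.sq_sqrt (by positivity)
  have hs1 : s ≤ 1 := by
    rw [show (1:ℝ) = Real.sqrt 1 from Real.sqrt_one.symm, hs]
    exact Real.sqrt_le_sqrt (by rw [div_le_one hL]; exact hμL)
  have hsL : Real.sqrt (L / μ) = s⁻¹ := by
    rw [hs, ← Real.sqrt_inv, inv_div]
  have hβs : β = (1 - s) / (1 + s) := by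
    rw [hβ, hsL, div_eq_div_iff (by positivity) (by positivity)]
    field_simp
  have hβ0 : 0 ≤ β := by
    rw [hβs]; exact div_nonneg (by linarith) (by linarith)
  -- extract eigenvector
  obtain ⟨v, hv0, hveq⟩ := nest_eig hlam
  set f := algebraMap ℝ ℂ with hf
  set A : Matrix (Fin n) (Fin n) ℝ := (1 : Matrix (Fin n) (Fin n) ℝ) - (1/L) • H with hA
  set Aℂ : Matrix (Fin n) (Fin n) ℂ := A.map f with hAc
  have hmap : (Matrix.fromBlocks ((1+β) • A) ((-β) • A) 1 0).map f
      = Matrix.fromBlocks ((((1+β):ℝ):ℂ) • Aℂ) ((((-β):ℝ):ℂ) • Aℂ)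
        (1 : Matrix (Fin n) (Fin n) ℂ) (0 : Matrix (Fin n) (Fin n) ℂ) := by
    rw [Matrix.fromBlocks_map]
    have e1 : ((1+β) • A).map f = (((1+β):ℝ):ℂ) • Aℂ := by
      ext i j
      simp [hAc, Matrix.map_apply, Matrix.smul_apply, smul_eq_mul, hf]
    have e2 : ((-β) • A).map f = (((-β):ℝ):ℂ) • Aℂ := by
      ext i j
      simp [hAc, Matrix.map_apply, Matrix.smul_apply, smul_eq_mul, hf]
    have e3 : (1 : Matrix (Fin n) (Fin n) ℝ).map f = 1 :=
      Matrix.map_one f (map_zero f) (map_one f)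
    have e4 : (0 : Matrix (Fin n) (Fin n) ℝ).map f = 0 := Matrix.map_zero f (map_zero f)
    rw [e1, e2, e3, e4]
  rw [hmap, Matrix.fromBlocks_mulVec] at hveq
  set x : Fin n → ℂ := v ∘ Sum.inl with hx
  set y : Fin n → ℂ := v ∘ Sum.inr with hy
  have eq2 : ∀ i, x i = lam * y i := fun i => by
    have := congrFun hveq (Sum.inr i)
    simpa [Matrix.one_mulVec, Matrix.zero_mulVec, Pi.smul_apply, smul_eq_mul, hy] using this
  have eq1 : ∀ i, (((1+β):ℝ):ℂ) * (Aℂ *ᵥ x) i + (((-β):ℝ):ℂ) * (Aℂ *ᵥ y) i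
      = lam * x i := fun i => by
    have h := congrFun hveq (Sum.inl i)
    simp only [Sum.elim_inl, Pi.add_apply, Matrix.smul_mulVec, Pi.smul_apply,
      smul_eq_mul] at h
    simpa only [hx, Function.comp_apply] using h
  have hy0 : y ≠ 0 := by
    intro hy0
    apply hv0
    funext j
    cases j with
    | inl i =>
      have h1 := eq2 i
      have : y i = 0 := congrFun hy0 i
      rw [this, mul_zero] at h1
      exact h1
    | inr i => exact congrFun hy0 i
  have hxs : x = lam • y := funext fun i => by rw [eq2 i]; rfl
  have hAxy : Aℂ *ᵥ x = lam • (Aℂ *ᵥ y) := by rw [hxs, Matrix.mulVec_smul]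
  set d : ℂ := (((1+β):ℝ):ℂ) * lam - ((β:ℝ):ℂ) with hd
  have key : ∀ i, d * (Aℂ *ᵥ y) i = lam^2 * y i := fun i => by
    have h1 := eq1 i
    rw [hAxy] at h1
    have h2 := eq2 i
    rw [h2] at h1
    simp only [Pi.smul_apply, smul_eq_mul] at h1
    rw [hd]
    push_cast at h1 ⊢
    linear_combination h1
  obtain ⟨i0, hi0⟩ : ∃ i, y i ≠ 0 := Function.ne_iff.mp hy0
  rcases eq_or_ne d 0 with hd0 | hd0
  · -- degenerate case: lam = 0 and β = 0, s = 1
    have hl2 : lam^2 * y i0 = 0 := by rw [← key i0, hd0, zero_mul]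
    have hlam0 : lam = 0 := by
      rcases mul_eq_zero.mp hl2 with h | h
      · exact pow_eq_zero_iff (two_ne_zero) |>.mp h
      · exact absurd h hi0
    have hb0 : β = 0 := by
      rw [hd, hlam0] at hd0
      have : ((β:ℝ):ℂ) = 0 := by linear_combination -hd0
      exact_mod_cast this
    have hseq : s = 1 := by
      rw [hβs] at hb0
      rcases div_eq_zero_iff.mp hb0 with h | h
      · linarith
      · linarith
    rw [hlam0]
    simp [hseq]
  · -- main case
    set ν : ℂ := lam^2 / d with hν
    have hAy : ∀ i, (Aℂ *ᵥ y) i = ν * y i := fun i => by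
      rw [hν, div_mul_eq_mul_div, eq_div_iff hd0]
      linear_combination key i
    have hAcs : Aℂ = (1 : Matrix (Fin n) (Fin n) ℂ) - (((1/L:ℝ)):ℂ) • (H.map f) := by
      ext i j
      by_cases hij : i = j <;>
        simp [hAc, hA, Matrix.map_apply, Matrix.sub_apply, Matrix.smul_apply,
          Matrix.one_apply, hij, smul_eq_mul, hf]
    have hLc : (((1/L:ℝ)):ℂ) ≠ 0 := by
      simp only [ne_eq, Complex.ofReal_eq_zero]
      positivity
    set c : ℂ := (1 - ν) / (((1/L:ℝ)):ℂ) with hc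
    have hHy : (H.map f) *ᵥ y = c • y := by
      funext i
      have h1 := hAy i
      rw [hAcs] at h1
      rw [Matrix.sub_mulVec, Matrix.smul_mulVec, Matrix.one_mulVec] at h1
      simp only [Pi.sub_apply, Pi.smul_apply, smul_eq_mul] at h1
      rw [Pi.smul_apply, smul_eq_mul, hc]
      rw [div_mul_eq_mul_div, eq_div_iff hLc]
      linear_combination -h1
    -- lower bound
    have hlowmap : ((H - μ • (1 : Matrix (Fin n) (Fin n) ℝ)).map f) *ᵥ y
        = (c - ((μ:ℝ):ℂ)) • y := by
      have hm : (H - μ • (1 : Matrix (Fin n) (Fin n) ℝ)).map f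
          = H.map f - ((μ:ℝ):ℂ) • 1 := by
        ext i j
        by_cases hij : i = j <;>
          simp [Matrix.map_apply, Matrix.sub_apply, Matrix.smul_apply, Matrix.one_apply,
            hij, smul_eq_mul, hf]
      rw [hm, Matrix.sub_mulVec, hHy, Matrix.smul_mulVec, Matrix.one_mulVec]
      funext i
      simp only [Pi.sub_apply, Pi.smul_apply, smul_eq_mul]
      ring
    have hupmap : ((L • (1 : Matrix (Fin n) (Fin n) ℝ) - H).map f) *ᵥ y
        = (((L:ℝ):ℂ) - c) • y := by
      have hm : (L • (1 : Matrix (Fin n) (Fin n) ℝ) - H).map f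
          = ((L:ℝ):ℂ) • 1 - H.map f := by
        ext i j
        by_cases hij : i = j <;>
          simp [Matrix.map_apply, Matrix.sub_apply, Matrix.smul_apply, Matrix.one_apply,
            hij, smul_eq_mul, hf]
      rw [hm, Matrix.sub_mulVec, hHy, Matrix.smul_mulVec, Matrix.one_mulVec]
      funext i
      simp only [Pi.sub_apply, Pi.smul_apply, smul_eq_mul]
      ring
    obtain ⟨him1, hre1⟩ := nest_psd_eig hlow hy0 hlowmap
    obtain ⟨him2, hre2⟩ := nest_psd_eig hup hy0 hupmap
    simp only [Complex.sub_im, Complex.sub_re, Complex.ofReal_im, Complex.ofReal_re,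
      sub_zero, zero_sub] at him1 hre1 him2 hre2
    -- c is real, with μ ≤ c.re ≤ L
    have hcim : c.im = 0 := him1
    have hcl : μ ≤ c.re := by linarith
    have hcu : c.re ≤ L := by linarith
    set h0 : ℝ := c.re with hh0
    have hcc : c = ((h0:ℝ):ℂ) := Complex.ext rfl (by simp [hcim])
    set a : ℝ := 1 - (1/L) * h0 with ha
    have hνa : ν = ((a:ℝ):ℂ) := by
      have h1 : ν = 1 - (((1/L:ℝ)):ℂ) * c := by
        rw [hc]
        field_simp
        ring
      rw [h1, hcc, ha]
      push_cast
      ring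
    have ha0 : 0 ≤ a := by
      rw [ha]
      have : (1/L) * h0 ≤ (1/L) * L :=
        mul_le_mul_of_nonneg_left hcu (by positivity)
      rw [one_div_mul_cancel hL.ne'] at this
      linarith
    have ha1 : a ≤ 1 - s^2 := by
      rw [ha, hs2]
      have : (1/L) * μ ≤ (1/L) * h0 :=
        mul_le_mul_of_nonneg_left hcl (by positivity)
      have h2 : (1/L) * μ = μ / L := by ring
      linarith [this, h2 ▸ this]
    -- the quadratic equation
    have hquad : lam^2 - ((((1+β)*a):ℝ):ℂ)*lam + (((β*a):ℝ):ℂ) = 0 := by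
      have h1 := key i0
      rw [hAy i0] at h1
      have h2 : d * ν = lam^2 := mul_right_cancel₀ hi0 (by linear_combination h1)
      rw [hνa, hd] at h2
      push_cast at h2 ⊢
      linear_combination -h2
    have hkey1 : (1+β)^2 * (1 - s^2) = 4*β := by
      rw [hβs]
      field_simp
      ring
    have hkey2 : β * (1 - s^2) = (1-s)^2 := by
      rw [hβs]
      field_simp
      ring
    have hdisc : ((1+β)*a)^2 ≤ 4*(β*a) := by
      nlinarith [mul_le_mul_of_nonneg_right
        (mul_le_mul_of_nonneg_left ha1 (sq_nonneg (1+β))) ha0, hkey1, ha0, hβ0]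
    have hnorm := nest_aux_quad ((1+β)*a) (β*a) lam hdisc hquad
    have hba : β * a ≤ (1-s)^2 := by
      rw [← hkey2]
      exact mul_le_mul_of_nonneg_left ha1 hβ0
    have hfin : ‖lam‖^2 ≤ (1-s)^2 := by rw [hnorm]; exact hba
    have h1s : (0:ℝ) ≤ 1 - s := by linarith
    have h2 := Real.sqrt_le_sqrt hfin
    rwa [Real.sqrt_sq (norm_nonneg lam), Real.sqrt_sq h1s] at h2
end
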